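/- Let u = 1^a 2^b with a, b ≥ 2. Then every graph G is u-representable: there exists a labeling G = ([n], E) and a word w over [n] containing all letters of [n] such that for distinct x < y, xy ∈ E if and only if w_{{x,y}} contains no factor of the form x^a y^b. -/

import Mathlib

/-- `red w` replaces each occurrence of the `i`-th smallest letter of `w` by `i`. -/
def red (w : List ℕ) : List ℕ :=
  w.map (fun x => (w.toFinset.filter (· < x)).card + 1)

/-- `w` has a `u`-match (starting at some position `i`): a factor of `w` of length `|u|`
whose reduction equals `red u` (which is `u` itself when `red u = u`). -/
def HasMatch (u w : List ℕ) : Prop :=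
  ∃ i, i + u.length ≤ w.length ∧ red ((w.drop i).take u.length) = red u

/-- The word `w` `u`-represents the labeled graph with vertex set `V` and adjacency `E`:
the letters occurring in `w` are exactly `V`, and two distinct vertices are adjacent
iff `w` restricted to these two letters has no `u`-match. -/
def Represents (u w : List ℕ) (V : Finset ℕ) (E : ℕ → ℕ → Prop) : Prop :=
  (∀ x, x ∈ w ↔ x ∈ V) ∧
  ∀ x ∈ V, ∀ y ∈ V, x ≠ y →
    (E x y ↔ ¬ HasMatch u (w.filter (fun z => z = x ∨ z = y)))


section Aux
open List
variable {x y : ℕ}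

lemma red_two {x y : ℕ} (hxy : x < y) (t : List ℕ) (ht : ∀ z ∈ t, z = x ∨ z = y)
    (hx : x ∈ t) : red t = t.map (fun z => if z = x then 1 else 2) := by
  unfold red
  apply List.map_congr_left
  intro z hz
  rcases ht z hz with rfl | rfl
  · rw [if_pos rfl]
    have : t.toFinset.filter (· < z) = ∅ := by
      apply Finset.filter_eq_empty_iff.mpr
      intro w hw
      rcases ht w (List.mem_toFinset.mp hw) with rfl | rfl <;> omega
    simp [this]
  · rw [if_neg (by omega)]
    have : t.toFinset.filter (· < z) = {x} := by
      apply Finset.ext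
      intro w
      simp only [Finset.mem_filter, List.mem_toFinset, Finset.mem_singleton]
      constructor
      · rintro ⟨hw, hlt⟩
        rcases ht w hw with rfl | rfl <;> omega
      · rintro rfl; exact ⟨hx, hxy⟩
    simp [this]


lemma red_u (a b : ℕ) (ha : 1 ≤ a) (hb : 1 ≤ b) :
    red (List.replicate a 1 ++ List.replicate b 2) = List.replicate a 1 ++ List.replicate b 2 := by
  rw [red_two (by omega : (1:ℕ) < 2)]
  · simp
  · intro z hz
    rcases List.mem_append.mp hz with h | h
    · exact Or.inl (List.eq_of_mem_replicate h)
    · exact Or.inr (List.eq_of_mem_replicate h)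
  · exact List.mem_append.mpr (Or.inl (List.mem_replicate.mpr ⟨by omega, rfl⟩))


lemma red_eq_iff {x y : ℕ} (a b : ℕ) (ha : 1 ≤ a) (hb : 1 ≤ b) (hxy : x < y)
    (t : List ℕ) (ht : ∀ z ∈ t, z = x ∨ z = y) :
    red t = red (List.replicate a 1 ++ List.replicate b 2) ↔
      t = List.replicate a x ++ List.replicate b y := by
  rw [red_u a b ha hb]
  constructor
  · intro h
    by_cases hx : x ∈ t
    · by_cases hy : y ∈ t
      · have hr : red t = t.map (fun z => if z = x then (1:ℕ) else 2) := red_two hxy t ht hx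
        have h2 : t.map (fun z => if z = x then (1:ℕ) else 2)
            = List.replicate a 1 ++ List.replicate b 2 := hr ▸ h
        have h3 : t.map ((fun z => if z = 1 then x else y) ∘ fun z => if z = x then (1:ℕ) else 2)
            = t := by
          conv_rhs => rw [← List.map_id t]
          apply List.map_congr_left
          intro z hz
          rcases ht z hz with rfl | rfl
          · simp
          · simp [hxy.ne', (by omega : (2:ℕ) ≠ 1)]
        calc t = (t.map (fun z => if z = x then (1:ℕ) else 2)).map
                  (fun z => if z = 1 then x else y) := by rw [List.map_map, h3]
          _ = List.replicate a x ++ List.replicate b y := by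
                rw [h2]; simp [(by omega : (2:ℕ) ≠ 1)]
      · exfalso
        have h2 : (2:ℕ) ∈ red t := by
          rw [h]
          exact List.mem_append.mpr (Or.inr (List.mem_replicate.mpr ⟨by omega, rfl⟩))
        unfold red at h2
        obtain ⟨z, hz, hz2⟩ := List.mem_map.mp h2
        have hcard : (t.toFinset.filter (· < z)).card = 1 := by omega
        obtain ⟨v, hv⟩ := Finset.card_eq_one.mp hcard
        have hvmem : v ∈ t.toFinset.filter (· < z) := hv ▸ Finset.mem_singleton_self v
        obtain ⟨hvt, hvz⟩ := Finset.mem_filter.mp hvmem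
        have hvt' := List.mem_toFinset.mp hvt
        have hz' : z = x := (ht z hz).resolve_right (fun h => hy (h ▸ hz))
        have hv' : v = x := (ht v hvt').resolve_right (fun h => hy (h ▸ hvt'))
        omega
    · exfalso
      have h2 : (2:ℕ) ∈ red t := by
        rw [h]
        exact List.mem_append.mpr (Or.inr (List.mem_replicate.mpr ⟨by omega, rfl⟩))
      unfold red at h2
      obtain ⟨z, hz, hz2⟩ := List.mem_map.mp h2
      have hcard : (t.toFinset.filter (· < z)).card = 1 := by omega
      obtain ⟨v, hv⟩ := Finset.card_eq_one.mp hcard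
      have hvmem : v ∈ t.toFinset.filter (· < z) := hv ▸ Finset.mem_singleton_self v
      obtain ⟨hvt, hvz⟩ := Finset.mem_filter.mp hvmem
      have hvt' := List.mem_toFinset.mp hvt
      have hz' : z = y := (ht z hz).resolve_left (fun h => hx (h ▸ hz))
      have hv' : v = y := (ht v hvt').resolve_left (fun h => hx (h ▸ hvt'))
      omega
  · rintro rfl
    rw [red_two hxy _ (fun z hz => by
        rcases List.mem_append.mp hz with h | h
        · exact Or.inl (List.eq_of_mem_replicate h)
        · exact Or.inr (List.eq_of_mem_replicate h))
      (List.mem_append.mpr (Or.inl (List.mem_replicate.mpr ⟨by omega, rfl⟩)))]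
    simp [hxy.ne']

lemma hasMatch_iff {x y : ℕ} (a b : ℕ) (ha : 1 ≤ a) (hb : 1 ≤ b) (hxy : x < y)
    (w : List ℕ) (hw : ∀ z ∈ w, z = x ∨ z = y) :
    HasMatch (List.replicate a 1 ++ List.replicate b 2) w ↔
      (List.replicate a x ++ List.replicate b y) <:+: w := by
  have hlen : (List.replicate a (1:ℕ) ++ List.replicate b 2).length = a + b := by simp
  constructor
  · rintro ⟨i, hi, hred⟩
    rw [hlen] at hi hred
    set t := (w.drop i).take (a + b) with htdef
    have hinf : t <:+: w := ((w.drop i).take_prefix (a+b)).isInfix.trans (w.drop_suffix i).isInfix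
    have ht : ∀ z ∈ t, z = x ∨ z = y := fun z hz => hw z (hinf.mem hz)
    rw [red_eq_iff a b ha hb hxy t ht] at hred
    exact hred ▸ hinf
  · rintro ⟨s, t, rfl⟩
    refine ⟨s.length, ?_, ?_⟩
    · simp [hlen]
    · rw [hlen]
      have : ((s ++ (List.replicate a x ++ List.replicate b y) ++ t).drop s.length).take (a+b)
          = List.replicate a x ++ List.replicate b y := by
        rw [List.append_assoc, List.drop_left]
        have h2 : (List.replicate a x ++ List.replicate b y).length = a + b := by simp
        rw [← h2, List.take_left]
      rw [this, red_eq_iff a b ha hb hxy]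
      intro z hz
      rcases List.mem_append.mp hz with h | h
      · exact Or.inl (List.eq_of_mem_replicate h)
      · exact Or.inr (List.eq_of_mem_replicate h)

variable {x y : ℕ}

lemma aux1 (hne : x ≠ y) (v : List ℕ) (k : ℕ) :
    ¬ [y, y] <+: (List.replicate k x ++ y :: x :: v) := by
  intro h
  cases k with
  | zero =>
    simp only [replicate, nil_append] at h
    rw [List.cons_prefix_cons] at h
    rw [List.cons_prefix_cons] at h
    exact hne h.2.1.symm
  | succ k =>
    rw [List.replicate_succ, List.cons_append, List.cons_prefix_cons] at h
    exact hne h.1.symm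

lemma aux2 (hne : x ≠ y) (v : List ℕ) (k : ℕ) (c : ℕ) (hc : c = x ∨ c = y) :
    ¬ [x, x, y, y] <+: (List.replicate k c ++ y :: x :: v) ∧
    ¬ [x, y, y] <+: (List.replicate k c ++ y :: x :: v) := by
  induction k with
  | zero =>
    constructor <;> · intro h; simp only [replicate, nil_append, List.cons_prefix_cons] at h
                      exact hne h.1
  | succ k ih =>
    rw [List.replicate_succ, List.cons_append]
    rcases hc with rfl | rfl
    · constructor
      · intro h
        rw [List.cons_prefix_cons] at h
        exact (ih).2 h.2
      · intro h
        rw [List.cons_prefix_cons] at h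
        exact aux1 hne v k h.2
    · constructor <;> · intro h; rw [List.cons_prefix_cons] at h; exact hne h.1

lemma aux3 (hne : x ≠ y) (v : List ℕ) (k : ℕ) (c : ℕ) (hc : c = x ∨ c = y)
    (h : ¬ [x, x, y, y] <:+: (y :: x :: v)) :
    ¬ [x, x, y, y] <:+: (List.replicate k c ++ y :: x :: v) := by
  induction k with
  | zero => simpa using h
  | succ k ih =>
    rw [List.replicate_succ, List.cons_append, List.infix_cons_iff]
    rintro (hp | hi)
    · rw [← List.cons_append] at hp
      rw [← List.replicate_succ] at hp
      exact (aux2 hne v (k+1) c hc).1 hp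
    · exact ih hi

lemma step (hne : x ≠ y) (v : List ℕ) (k : ℕ) (c : ℕ) (hc : c = x ∨ c = y)
    (h : ¬ [x, x, y, y] <:+: (y :: x :: v)) :
    ¬ [x, x, y, y] <:+: (y :: x :: (List.replicate k c ++ y :: x :: v)) := by
  rw [List.infix_cons_iff]
  rintro (hp | hi)
  · rw [List.cons_prefix_cons] at hp
    exact hne hp.1
  · rw [List.infix_cons_iff] at hi
    rcases hi with hp | hi
    · rw [List.cons_prefix_cons] at hp
      exact (aux2 hne v k c hc).2 hp.2
    · exact aux3 hne v k c hc h hi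

lemma goodlist (hne : x ≠ y) (bs : List (List ℕ))
    (hbs : ∀ blk ∈ bs, ∃ k c, (c = x ∨ c = y) ∧ blk = List.replicate k c) :
    ¬ [x, x, y, y] <:+: ([y, x] ++ (bs.map (· ++ [y, x])).flatten) := by
  induction bs with
  | nil =>
    intro h
    have := h.length_le
    simp at this
  | cons b bs ih =>
    obtain ⟨k, c, hc, rfl⟩ := hbs b List.mem_cons_self
    have ih' := ih (fun blk hblk => hbs blk (List.mem_cons_of_mem _ hblk))
    have heq : ([y, x] ++ (((List.replicate k c ++ [y,x]) :: bs.map (· ++ [y, x]))).flatten)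
        = y :: x :: (List.replicate k c ++ y :: x :: (bs.map (· ++ [y, x])).flatten) := by
      simp
    rw [List.map_cons, heq]
    exact step hne _ k c hc (by simpa using ih')

lemma filtR0 (hxy : x < y) (s n : ℕ) (h : y < s) :
    (List.range' s n).filter (fun z => decide (z = x ∨ z = y)) = [] := by
  apply List.filter_eq_nil_iff.mpr
  intro z hz
  rw [List.mem_range'_1] at hz
  simp only [decide_eq_true_eq]
  omega

lemma filtR1 (hxy : x < y) (s n : ℕ) (h1 : x < s) (h2 : s ≤ y) (h3 : y < s + n) :
    (List.range' s n).filter (fun z => decide (z = x ∨ z = y)) = [y] := by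
  induction n generalizing s with
  | zero => omega
  | succ n ih =>
    rw [List.range'_succ, List.filter_cons]
    by_cases hs : s = y
    · subst hs
      rw [if_pos (by simp), filtR0 hxy _ _ (by omega)]
    · rw [if_neg (by simp; omega)]
      exact ih (s+1) (by omega) (by omega) (by omega)

lemma filtR2 (hxy : x < y) (s n : ℕ) (h1 : s ≤ x) (h3 : y < s + n) :
    (List.range' s n).filter (fun z => decide (z = x ∨ z = y)) = [x, y] := by
  induction n generalizing s with
  | zero => omega
  | succ n ih =>
    rw [List.range'_succ, List.filter_cons]
    by_cases hs : s = x
    · subst hs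
      rw [if_pos (by simp), filtR1 hxy _ _ (by omega) (by omega) (by omega)]
    · rw [if_neg (by simp; omega)]
      exact ih (s+1) (by omega) (by omega)

lemma main_construction (a b : ℕ) (ha : 2 ≤ a) (hb : 2 ≤ b) (n : ℕ) (E : ℕ → ℕ → Prop)
    (hEsymm : ∀ x y, E x y → E y x) :
    ∃ w, Represents (List.replicate a 1 ++ List.replicate b 2) w (Finset.Icc 1 n) E := by
  classical
  set L : List (ℕ × ℕ) := ((Finset.Icc 1 n ×ˢ Finset.Icc 1 n).filter
      fun p => p.1 < p.2 ∧ ¬ E p.1 p.2).toList with hL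
  have memL : ∀ p : ℕ × ℕ, p ∈ L ↔
      ((1 ≤ p.1 ∧ p.1 ≤ n) ∧ 1 ≤ p.2 ∧ p.2 ≤ n) ∧ p.1 < p.2 ∧ ¬ E p.1 p.2 := by
    intro p
    rw [hL, Finset.mem_toList, Finset.mem_filter, Finset.mem_product, Finset.mem_Icc,
      Finset.mem_Icc]
  set S : List ℕ := (List.range' 1 n).reverse with hS
  set w : List ℕ :=
    S ++ (L.map (fun p => List.replicate a p.1 ++ List.replicate b p.2 ++ S)).flatten with hw
  refine ⟨w, ?_, ?_⟩
  · -- letters of w = Icc 1 n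
    intro z
    rw [Finset.mem_Icc]
    constructor
    · intro hz
      rcases List.mem_append.mp hz with hz | hz
      · rw [hS, List.mem_reverse, List.mem_range'_1] at hz
        omega
      · rw [List.mem_flatten] at hz
        obtain ⟨l, hl, hzl⟩ := hz
        rw [List.mem_map] at hl
        obtain ⟨p, hp, rfl⟩ := hl
        have hmem := (memL p).mp hp
        rcases List.mem_append.mp hzl with h | h
        · rcases List.mem_append.mp h with h | h
          · rw [List.eq_of_mem_replicate h]; omega
          · rw [List.eq_of_mem_replicate h]; omega
        · rw [hS, List.mem_reverse, List.mem_range'_1] at h; omega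
    · intro hz
      apply List.mem_append.mpr
      left
      rw [hS, List.mem_reverse, List.mem_range'_1]
      omega
  · -- adjacency condition
    have key : ∀ x, 1 ≤ x → x ≤ n → ∀ y, y ≤ n → x < y →
        (E x y ↔ ¬ HasMatch (List.replicate a 1 ++ List.replicate b 2)
          (w.filter (fun z => decide (z = x ∨ z = y)))) := by
      intro x hx1 hxn y hyn hxy
      have hw'mem : ∀ z ∈ w.filter (fun z => decide (z = x ∨ z = y)), z = x ∨ z = y := by
        intro z hz
        rw [List.mem_filter] at hz
        exact of_decide_eq_true hz.2
      rw [hasMatch_iff a b (by omega) (by omega) hxy _ hw'mem]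
      have filtS : S.filter (fun z => decide (z = x ∨ z = y)) = [y, x] := by
        rw [hS, List.filter_reverse, filtR2 hxy 1 n (by omega) (by omega)]
        rfl
      constructor
      · -- edge: no factor
        intro hExy hinf
        have hxxyy : [x,x,y,y] <:+: (List.replicate a x ++ List.replicate b y) := by
          refine ⟨List.replicate (a-2) x, List.replicate (b-2) y, ?_⟩
          have h1 : List.replicate (a-2) x ++ [x,x] = List.replicate a x := by
            rw [show [x,x] = List.replicate 2 x from rfl, ← List.replicate_add]
            congr 1; omega
          have h2 : [y,y] ++ List.replicate (b-2) y = List.replicate b y := by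
            rw [show [y,y] = List.replicate 2 y from rfl, ← List.replicate_add]
            congr 1; omega
          calc List.replicate (a-2) x ++ [x,x,y,y] ++ List.replicate (b-2) y
              = (List.replicate (a-2) x ++ [x,x]) ++ ([y,y] ++ List.replicate (b-2) y) := by
                simp [List.append_assoc]
            _ = List.replicate a x ++ List.replicate b y := by rw [h1, h2]
        have hxxyy' : [x,x,y,y] <:+: w.filter (fun z => decide (z = x ∨ z = y)) :=
          hxxyy.trans hinf
        have hw'eq : w.filter (fun z => decide (z = x ∨ z = y)) = [y,x] ++
            ((L.map fun p => (List.replicate a p.1 ++ List.replicate b p.2).filter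
              (fun z => decide (z = x ∨ z = y))).map (· ++ [y,x])).flatten := by
          rw [hw, List.filter_append, filtS, List.filter_flatten, List.map_map, List.map_map]
          congr 1
          congr 1
          apply List.map_congr_left
          intro p _
          simp only [Function.comp_apply, List.filter_append, filtS, List.append_assoc]
        have hbs : ∀ blk ∈ (L.map fun p =>
            (List.replicate a p.1 ++ List.replicate b p.2).filter
              (fun z => decide (z = x ∨ z = y))),
            ∃ k c, (c = x ∨ c = y) ∧ blk = List.replicate k c := by
          intro blk hblk
          rw [List.mem_map] at hblk
          obtain ⟨p, hp, rfl⟩ := hblk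
          obtain ⟨⟨hp1, hp2⟩, hplt, hpnE⟩ := (memL p).mp hp
          rw [List.filter_append, List.filter_replicate, List.filter_replicate]
          by_cases h1 : p.1 = x
          · have h2y : p.2 ≠ y := fun h2 => hpnE (by rw [h1, h2]; exact hExy)
            have h2x : p.2 ≠ x := by omega
            rw [if_pos (by simp [h1]), if_neg (by simp [h2x, h2y])]
            exact ⟨a, x, Or.inl rfl, by rw [h1]; simp⟩
          · by_cases h1' : p.1 = y
            · have h2x : p.2 ≠ x := by omega
              have h2y : p.2 ≠ y := by omega
              rw [if_pos (by simp [h1']), if_neg (by simp [h2x, h2y])]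
              exact ⟨a, y, Or.inr rfl, by rw [h1']; simp⟩
            · rw [if_neg (by simp [h1, h1'])]
              by_cases h2 : p.2 = x
              · rw [if_pos (by simp [h2])]
                exact ⟨b, x, Or.inl rfl, by rw [h2]; simp⟩
              · by_cases h2' : p.2 = y
                · rw [if_pos (by simp [h2'])]
                  exact ⟨b, y, Or.inr rfl, by rw [h2']; simp⟩
                · rw [if_neg (by simp [h2, h2'])]
                  exact ⟨0, x, Or.inl rfl, by simp⟩
        rw [hw'eq] at hxxyy'
        exact goodlist (by omega) _ hbs hxxyy'
      · -- non-edge: factor exists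
        intro hninf
        by_contra hnE
        apply hninf
        have hpL : (x, y) ∈ L := (memL (x,y)).mpr ⟨⟨⟨hx1, hxn⟩, by omega, hyn⟩, hxy, hnE⟩
        have hgad : (List.replicate a x ++ List.replicate b y ++ S) ∈
            L.map (fun p => List.replicate a p.1 ++ List.replicate b p.2 ++ S) :=
          List.mem_map.mpr ⟨(x,y), hpL, rfl⟩
        have h1 : (List.replicate a x ++ List.replicate b y) <:+: w := by
          have h2 := List.infix_of_mem_flatten hgad
          have h3 : (List.replicate a x ++ List.replicate b y) <+:
              (List.replicate a x ++ List.replicate b y ++ S) := ⟨S, by simp⟩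
          have h4 : (L.map (fun p =>
              List.replicate a p.1 ++ List.replicate b p.2 ++ S)).flatten <:+: w := ⟨S, [], by simp [hw]⟩
          exact (h3.isInfix.trans h2).trans h4
        obtain ⟨s, t, hst⟩ := h1
        refine ⟨s.filter (fun z => decide (z = x ∨ z = y)),
          t.filter (fun z => decide (z = x ∨ z = y)), ?_⟩
        rw [← hst, List.filter_append, List.filter_append, List.filter_append,
          List.filter_replicate, List.filter_replicate, if_pos (by simp), if_pos (by simp [hxy.ne])]
    intro x hx y hy hne
    rw [Finset.mem_Icc] at hx hy
    rcases Nat.lt_or_ge x y with hxy | hge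
    · exact key x hx.1 hx.2 y hy.2 hxy
    · have hyx : y < x := by omega
      have hfil : w.filter (fun z => decide (z = x ∨ z = y))
          = w.filter (fun z => decide (z = y ∨ z = x)) := by
        apply List.filter_congr
        intro z _
        exact decide_eq_decide.mpr or_comm
      have hEsym : E x y ↔ E y x := ⟨hEsymm x y, hEsymm y x⟩
      rw [hfil, hEsym]
      exact key y hy.1 hy.2 x hx.2 hyx


end Aux
/-- for `u = 1^a 2^b` with `a, b ≥ 2`, every graph is `u`-representable:
there exist a labeling of the vertices by `[n]` and a representing word. -/
theorem every_graph_1122_representable (a b : ℕ) (ha : 2 ≤ a) (hb : 2 ≤ b)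
    (V : Type) [Fintype V] [DecidableEq V] (G : SimpleGraph V) :
    ∃ (φ : V ≃ Fin (Fintype.card V)) (w : List ℕ),
      Represents (List.replicate a 1 ++ List.replicate b 2)
        w (Finset.Icc 1 (Fintype.card V))
        (fun x y => ∃ p q : V, G.Adj p q ∧ x = (φ p : ℕ) + 1 ∧ y = (φ q : ℕ) + 1) := by
  obtain ⟨w, hw⟩ := main_construction a b ha hb (Fintype.card V)
    (fun x y => ∃ p q : V, G.Adj p q ∧ x = ((Fintype.equivFin V) p : ℕ) + 1
      ∧ y = ((Fintype.equivFin V) q : ℕ) + 1)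
    (fun x y ⟨p, q, h1, h2, h3⟩ => ⟨q, p, h1.symm, h3, h2⟩)
  exact ⟨Fintype.equivFin V, w, hw⟩
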